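/- For every SKS proof of a formula α (a derivation from t to α), there exists a cut-free SKS proof of α, i.e. an SKS proof of α containing no instance of the rule ai↑. -/

import Mathlib

set_option linter.unusedVariables false

namespace AF

/-! ### Formulae of system SKS.

Atoms are pairs `(n, b)`; the involution `ā` flips the Boolean, so it is
fixed-point free. -/

inductive Formula : Type
  | tt : Formula
  | ff : Formula
  | atom : ℕ → Bool → Formula
  | or : Formula → Formula → Formula
  | and : Formula → Formula → Formula
  deriving DecidableEq

namespace Formula

/-- Subformula at a position (`false` = left child, `true` = right child). -/
def sub : Formula → List Bool → Option Formula
  | φ, [] => some φ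
  | .or α _, false :: p => sub α p
  | .or _ β, true :: p => sub β p
  | .and α _, false :: p => sub α p
  | .and _ β, true :: p => sub β p
  | _, _ :: _ => none

/-- Replace the subformula at a position. -/
def repl : Formula → List Bool → Formula → Formula
  | _, [], ψ => ψ
  | .or α β, false :: p, ψ => .or (repl α p ψ) β
  | .or α β, true :: p, ψ => .or α (repl β p ψ)
  | .and α β, false :: p, ψ => .and (repl α p ψ) β
  | .and α β, true :: p, ψ => .and α (repl β p ψ)
  | φ, _ :: _, _ => φ

/-- `p` is an atom occurrence of `φ`. -/
def IsOcc (φ : Formula) (p : List Bool) : Prop :=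
  ∃ n b, φ.sub p = some (.atom n b)

end Formula

/-! ### Inference rules.

The rule `=` of SKS replaces a formula by an equivalent one under
commutativity, associativity and the unit equations; each single instance of
`=` applies one equation (in either direction), so we list the equations as
individual rule names, all marked as being instances of `=` via `isEq`. -/

inductive RuleName : Type
  | aiDown | aiUp | awDown | awUp | acDown | acUp
  | s | m
  | eqOrComm | eqAndComm
  | eqOrAssocL | eqOrAssocR | eqAndAssocL | eqAndAssocR
  | eqOrUnitDel | eqOrUnitAdd | eqAndUnitDel | eqAndUnitAdd
  | eqTTDel | eqTTAdd | eqFFDel | eqFFAdd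
  deriving DecidableEq

namespace RuleName

/-- The atomic structural rules. -/
def isStructural : RuleName → Bool
  | .aiDown | .aiUp | .awDown | .awUp | .acDown | .acUp => true
  | _ => false

/-- The rule names that are instances of the rule `=`. -/
def isEq : RuleName → Bool
  | .aiDown | .aiUp | .awDown | .awUp | .acDown | .acUp | .s | .m => false
  | _ => true

end RuleName

/-- Rule instances (redex ⟹ contractum). -/
inductive RuleInstance : RuleName → Formula → Formula → Prop
  | aiDown (n : ℕ) (b : Bool) :
      RuleInstance .aiDown .tt (.or (.atom n b) (.atom n (!b)))
  | aiUp (n : ℕ) (b : Bool) :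
      RuleInstance .aiUp (.and (.atom n b) (.atom n (!b))) .ff
  | awDown (n : ℕ) (b : Bool) : RuleInstance .awDown .ff (.atom n b)
  | awUp (n : ℕ) (b : Bool) : RuleInstance .awUp (.atom n b) .tt
  | acDown (n : ℕ) (b : Bool) :
      RuleInstance .acDown (.or (.atom n b) (.atom n b)) (.atom n b)
  | acUp (n : ℕ) (b : Bool) :
      RuleInstance .acUp (.atom n b) (.and (.atom n b) (.atom n b))
  | s (α β γ : Formula) :
      RuleInstance .s (.and α (.or β γ)) (.or (.and α β) γ)
  | m (α β γ δ : Formula) :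
      RuleInstance .m (.or (.and α β) (.and γ δ)) (.and (.or α γ) (.or β δ))
  | eqOrComm (α β : Formula) : RuleInstance .eqOrComm (.or α β) (.or β α)
  | eqAndComm (α β : Formula) : RuleInstance .eqAndComm (.and α β) (.and β α)
  | eqOrAssocL (α β γ : Formula) :
      RuleInstance .eqOrAssocL (.or (.or α β) γ) (.or α (.or β γ))
  | eqOrAssocR (α β γ : Formula) :
      RuleInstance .eqOrAssocR (.or α (.or β γ)) (.or (.or α β) γ)
  | eqAndAssocL (α β γ : Formula) :
      RuleInstance .eqAndAssocL (.and (.and α β) γ) (.and α (.and β γ))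
  | eqAndAssocR (α β γ : Formula) :
      RuleInstance .eqAndAssocR (.and α (.and β γ)) (.and (.and α β) γ)
  | eqOrUnitDel (α : Formula) : RuleInstance .eqOrUnitDel (.or α .ff) α
  | eqOrUnitAdd (α : Formula) : RuleInstance .eqOrUnitAdd α (.or α .ff)
  | eqAndUnitDel (α : Formula) : RuleInstance .eqAndUnitDel (.and α .tt) α
  | eqAndUnitAdd (α : Formula) : RuleInstance .eqAndUnitAdd α (.and α .tt)
  | eqTTDel : RuleInstance .eqTTDel (.or .tt .tt) .tt
  | eqTTAdd : RuleInstance .eqTTAdd .tt (.or .tt .tt)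
  | eqFFDel : RuleInstance .eqFFDel (.and .ff .ff) .ff
  | eqFFAdd : RuleInstance .eqFFAdd .ff (.and .ff .ff)

/-- One (deep) inference step applying rule `r` at position `q`. -/
def StepAt (r : RuleName) (q : List Bool) (φ ψ : Formula) : Prop :=
  ∃ γ δ, φ.sub q = some γ ∧ RuleInstance r γ δ ∧ ψ = φ.repl q δ

/-- One inference step using a rule from the set `S`. -/
def Step (S : Set RuleName) (φ ψ : Formula) : Prop :=
  ∃ r ∈ S, ∃ q, StepAt r q φ ψ

/-- There is a derivation from `φ` to `ψ` using only rules from `S`. -/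
def Derives (S : Set RuleName) : Formula → Formula → Prop :=
  Relation.ReflTransGen (Step S)

/-! ### Derivations as explicit data (for the theory of atomic flows). -/

/-- A derivation: a premiss and a chain of steps, each recorded by its rule
name, the position of the redex, and the resulting formula. -/
structure Deriv : Type where
  prem : Formula
  steps : List (RuleName × List Bool × Formula)

namespace Deriv

/-- The `i`-th step datum. -/
def stepAt (Φ : Deriv) (i : ℕ) : RuleName × List Bool × Formula :=
  Φ.steps.getD i (RuleName.s, ([] : List Bool), Formula.tt)

/-- The `i`-th formula of the derivation (`0` is the premiss). -/
def fml (Φ : Deriv) (i : ℕ) : Formula :=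
  (Φ.prem :: Φ.steps.map (fun t => t.2.2)).getD i Φ.prem

/-- Number of formulae in the derivation. -/
def nf (Φ : Deriv) : ℕ := Φ.steps.length + 1

/-- The conclusion of the derivation. -/
def concl (Φ : Deriv) : Formula := Φ.fml Φ.steps.length

/-- The derivation is well formed: every recorded step is a correct
inference step of SKS. -/
def WF (Φ : Deriv) : Prop :=
  ∀ i, i < Φ.steps.length →
    StepAt (Φ.stepAt i).1 (Φ.stepAt i).2.1 (Φ.fml i) (Φ.fml (i + 1))

end Deriv

/-! ### Atomic flows. -/

inductive FlowLabel : Type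
  | aiDown | aiUp | awDown | awUp | acDown | acUp
  deriving DecidableEq

/-- Required (number of lower edges, number of upper edges) of a vertex. -/
def labDeg : FlowLabel → ℕ × ℕ
  | .aiDown => (2, 0)
  | .aiUp => (0, 2)
  | .awDown => (1, 0)
  | .awUp => (0, 1)
  | .acDown => (1, 2)
  | .acUp => (2, 1)

/-- The data of an atomic flow: vertices, edges, labels, and the two
endpoint maps.  `up e = none` means the upper endpoint is `⊤`, and
`lo e = none` means the lower endpoint is `⊥`. -/
structure PreFlow : Type where
  V : Finset ℕ
  E : Finset ℕ
  η : ℕ → FlowLabel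
  up : ℕ → Option ℕ
  lo : ℕ → Option ℕ

namespace PreFlow

/-- Lower edges of a vertex. -/
def Ledges (F : PreFlow) (v : ℕ) : Finset ℕ :=
  F.E.filter (fun e => F.up e = some v)

/-- Upper edges of a vertex. -/
def Uedges (F : PreFlow) (v : ℕ) : Finset ℕ :=
  F.E.filter (fun e => F.lo e = some v)

/-- All edges of a vertex. -/
def edges (F : PreFlow) (v : ℕ) : Finset ℕ := F.Ledges v ∪ F.Uedges v

def degOK (F : PreFlow) : Prop :=
  ∀ v ∈ F.V, (F.Ledges v).card = (labDeg (F.η v)).1 ∧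
    (F.Uedges v).card = (labDeg (F.η v)).2

def endpointsOK (F : PreFlow) : Prop :=
  ∀ e ∈ F.E, (∀ v, F.up e = some v → v ∈ F.V) ∧
    (∀ v, F.lo e = some v → v ∈ F.V)

/-- No cyclic sequence of edges `ε₁, …, ε_h` with
`up (ε_i) = lo (ε_(i+1 mod h))`. -/
def Acyclic (F : PreFlow) : Prop :=
  ¬ ∃ (h : ℕ) (ε : Fin (h + 1) → ℕ), (∀ i, ε i ∈ F.E) ∧
      ∀ i : Fin (h + 1), (F.up (ε i)).isSome ∧ F.up (ε i) = F.lo (ε (i + 1))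

/-- `π` is a polarity assignment (`false` = `−`, `true` = `+`). -/
def PolarityOK (F : PreFlow) (π : ℕ → Bool) : Prop :=
  ∀ v ∈ F.V,
    ((F.η v = .acDown ∨ F.η v = .acUp) →
      ∀ e₁ ∈ F.edges v, ∀ e₂ ∈ F.edges v, π e₁ = π e₂) ∧
    ((F.η v = .aiDown ∨ F.η v = .aiUp) →
      ∃ e₁ ∈ F.edges v, ∃ e₂ ∈ F.edges v, π e₁ ≠ π e₂)

/-- `F` is an atomic flow. -/
def IsFlow (F : PreFlow) : Prop :=
  F.degOK ∧ F.endpointsOK ∧ F.Acyclic ∧ ∃ π, F.PolarityOK π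

end PreFlow

/-! ### Paths, ai-paths, cycles. -/

/-- An endpoint of a path: a vertex, or `⊤`, or `⊥`. -/
inductive VPt : Type
  | ver : ℕ → VPt
  | top : VPt
  | bot : VPt
  deriving DecidableEq

/-- The upper endpoint of edge `e` is `ν`. -/
def srcOK (F : PreFlow) (ν : VPt) (e : ℕ) : Prop :=
  match ν with
  | .ver v => F.up e = some v
  | .top => F.up e = none
  | .bot => False

/-- The lower endpoint of edge `e` is `ν`. -/
def tgtOK (F : PreFlow) (ν : VPt) (e : ℕ) : Prop :=
  match ν with
  | .ver v => F.lo e = some v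
  | .bot => F.lo e = none
  | .top => False

/-- A downward path from `ν` to `ν'` (a nonempty sequence of edges, each
hanging from the lower endpoint of the previous one). -/
def IsDownPath (F : PreFlow) (ν ν' : VPt) (l : List ℕ) : Prop :=
  l ≠ [] ∧ (∀ e ∈ l, e ∈ F.E) ∧
  (∀ i, i + 1 < l.length →
    ∃ v ∈ F.V, F.lo (l.getD i 0) = some v ∧ F.up (l.getD (i + 1) 0) = some v) ∧
  srcOK F ν (l.getD 0 0) ∧ tgtOK F ν' (l.getD (l.length - 1) 0)

/-- A path from `ν` to `ν'`: a downward path, or the reverse of a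
downward path from `ν'` to `ν`. -/
def IsPath (F : PreFlow) (ν ν' : VPt) (l : List ℕ) : Prop :=
  IsDownPath F ν ν' l ∨ IsDownPath F ν' ν l.reverse

/-- ai-paths: paths, closed under concatenation (in distinct edges) at
interaction and cointeraction vertices. -/
inductive AIPath (F : PreFlow) : VPt → VPt → List ℕ → Prop
  | single {ν ν' : VPt} {l : List ℕ} : IsPath F ν ν' l → AIPath F ν ν' l
  | join {ν ν' : VPt} {v : ℕ} {l₁ l₂ : List ℕ} {e e' : ℕ} :
      v ∈ F.V → (F.η v = .aiDown ∨ F.η v = .aiUp) →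
      AIPath F ν (.ver v) (l₁ ++ [e]) →
      AIPath F (.ver v) ν' (e' :: l₂) →
      e ≠ e' →
      AIPath F ν ν' (l₁ ++ [e] ++ e' :: l₂)

/-- The flow contains an ai-cycle: an ai-path from a vertex to itself in
which no edge appears twice. -/
def HasAICycle (F : PreFlow) : Prop :=
  ∃ v l, v ∈ F.V ∧ AIPath F (.ver v) (.ver v) l ∧ l.Nodup

def CycleFree (F : PreFlow) : Prop := ¬ HasAICycle F

/-- An ai-connection: a path from an interaction vertex to a cointeraction
vertex or vice versa. -/
def IsConnection (F : PreFlow) (l : List ℕ) : Prop :=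
  ∃ v v', v ∈ F.V ∧ v' ∈ F.V ∧
    ((F.η v = .aiDown ∧ F.η v' = .aiUp) ∨
     (F.η v = .aiUp ∧ F.η v' = .aiDown)) ∧
    IsPath F (.ver v) (.ver v') l

/-- A simple edge: an ai-connection consisting of a single edge. -/
def SimpleEdge (F : PreFlow) (e : ℕ) : Prop := IsConnection F [e]

/-- A clean path: an ai-path all of whose ai-connections are simple edges. -/
def IsCleanPath (F : PreFlow) (ν ν' : VPt) (l : List ℕ) : Prop :=
  AIPath F ν ν' l ∧
  ∀ l₁ l₂ l₃, l = l₁ ++ l₂ ++ l₃ → IsConnection F l₂ → l₂.length = 1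

/-! ### Local flow reduction rules. -/

open PreFlow

/-- Rule `w↓-c↓`: a weakening feeding a contraction is erased, merging the
contraction's other two edges. -/
def RedWdCd (A B : PreFlow) : Prop :=
  ∃ v₁ v₂ e e₂ e₃,
    v₁ ∈ A.V ∧ v₂ ∈ A.V ∧ v₁ ≠ v₂ ∧
    A.η v₁ = .awDown ∧ A.η v₂ = .acDown ∧
    e ∈ A.E ∧ e₂ ∈ A.E ∧ e₃ ∈ A.E ∧ e ≠ e₂ ∧ e ≠ e₃ ∧ e₂ ≠ e₃ ∧
    A.up e = some v₁ ∧ A.lo e = some v₂ ∧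
    A.lo e₂ = some v₂ ∧ A.up e₃ = some v₂ ∧
    B.V = (A.V.erase v₁).erase v₂ ∧
    B.E = (A.E.erase e).erase e₃ ∧
    B.η = A.η ∧ B.up = A.up ∧
    B.lo = Function.update A.lo e₂ (A.lo e₃)

/-- Rule `c↑-w↑` (dual of `w↓-c↓`). -/
def RedCuWu (A B : PreFlow) : Prop :=
  ∃ v₁ v₂ e e₂ e₃,
    v₁ ∈ A.V ∧ v₂ ∈ A.V ∧ v₁ ≠ v₂ ∧
    A.η v₁ = .awUp ∧ A.η v₂ = .acUp ∧
    e ∈ A.E ∧ e₂ ∈ A.E ∧ e₃ ∈ A.E ∧ e ≠ e₂ ∧ e ≠ e₃ ∧ e₂ ≠ e₃ ∧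
    A.lo e = some v₁ ∧ A.up e = some v₂ ∧
    A.up e₂ = some v₂ ∧ A.lo e₃ = some v₂ ∧
    B.V = (A.V.erase v₁).erase v₂ ∧
    B.E = (A.E.erase e).erase e₃ ∧
    B.η = A.η ∧ B.lo = A.lo ∧
    B.up = Function.update A.up e₂ (A.up e₃)

/-- Rule `w↓-i↑`: a weakening feeding a cointeraction is replaced by a
coweakening on the other cointeraction edge. -/
def RedWdIu (A B : PreFlow) : Prop :=
  ∃ v₁ v₂ e e₂,
    v₁ ∈ A.V ∧ v₂ ∈ A.V ∧ v₁ ≠ v₂ ∧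
    A.η v₁ = .awDown ∧ A.η v₂ = .aiUp ∧
    e ∈ A.E ∧ e₂ ∈ A.E ∧ e ≠ e₂ ∧
    A.up e = some v₁ ∧ A.lo e = some v₂ ∧ A.lo e₂ = some v₂ ∧
    B.V = A.V.erase v₁ ∧ B.E = A.E.erase e ∧
    B.η = Function.update A.η v₂ .awUp ∧
    B.up = A.up ∧ B.lo = A.lo

/-- Rule `i↓-w↑` (dual of `w↓-i↑`). -/
def RedIdWu (A B : PreFlow) : Prop :=
  ∃ v₁ v₂ e e₂,
    v₁ ∈ A.V ∧ v₂ ∈ A.V ∧ v₁ ≠ v₂ ∧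
    A.η v₁ = .awUp ∧ A.η v₂ = .aiDown ∧
    e ∈ A.E ∧ e₂ ∈ A.E ∧ e ≠ e₂ ∧
    A.lo e = some v₁ ∧ A.up e = some v₂ ∧ A.up e₂ = some v₂ ∧
    B.V = A.V.erase v₁ ∧ B.E = A.E.erase e ∧
    B.η = Function.update A.η v₂ .awDown ∧
    B.up = A.up ∧ B.lo = A.lo

/-- Rule `w↓-w↑`: a weakening joined to a coweakening is erased. -/
def RedWdWu (A B : PreFlow) : Prop :=
  ∃ v₁ v₂ e,
    v₁ ∈ A.V ∧ v₂ ∈ A.V ∧ v₁ ≠ v₂ ∧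
    A.η v₁ = .awDown ∧ A.η v₂ = .awUp ∧
    e ∈ A.E ∧ A.up e = some v₁ ∧ A.lo e = some v₂ ∧
    B.V = (A.V.erase v₁).erase v₂ ∧ B.E = A.E.erase e ∧
    B.η = A.η ∧ B.up = A.up ∧ B.lo = A.lo

/-- Rule `w↓-c↑`: a weakening feeding a cocontraction is replaced by two
weakenings. -/
def RedWdCu (A B : PreFlow) : Prop :=
  ∃ v₁ v₂ e e₁ e₂,
    v₁ ∈ A.V ∧ v₂ ∈ A.V ∧ v₁ ≠ v₂ ∧
    A.η v₁ = .awDown ∧ A.η v₂ = .acUp ∧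
    e ∈ A.E ∧ e₁ ∈ A.E ∧ e₂ ∈ A.E ∧ e ≠ e₁ ∧ e ≠ e₂ ∧ e₁ ≠ e₂ ∧
    A.up e = some v₁ ∧ A.lo e = some v₂ ∧
    A.up e₁ = some v₂ ∧ A.up e₂ = some v₂ ∧
    B.V = A.V ∧ B.E = A.E.erase e ∧
    B.η = Function.update A.η v₂ .awDown ∧
    B.up = Function.update A.up e₁ (some v₁) ∧
    B.lo = A.lo

/-- Rule `c↓-w↑` (dual of `w↓-c↑`). -/
def RedCdWu (A B : PreFlow) : Prop :=
  ∃ v₁ v₂ e e₁ e₂,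
    v₁ ∈ A.V ∧ v₂ ∈ A.V ∧ v₁ ≠ v₂ ∧
    A.η v₁ = .awUp ∧ A.η v₂ = .acDown ∧
    e ∈ A.E ∧ e₁ ∈ A.E ∧ e₂ ∈ A.E ∧ e ≠ e₁ ∧ e ≠ e₂ ∧ e₁ ≠ e₂ ∧
    A.lo e = some v₁ ∧ A.up e = some v₂ ∧
    A.lo e₁ = some v₂ ∧ A.lo e₂ = some v₂ ∧
    B.V = A.V ∧ B.E = A.E.erase e ∧
    B.η = Function.update A.η v₂ .awUp ∧
    B.lo = Function.update A.lo e₁ (some v₁) ∧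
    B.up = A.up

/-- Rule `c↓-i↑`: a contraction whose output edge enters a cointeraction is
replaced by a cocontraction on the other cointeraction edge followed by two
cointeractions. -/
def RedCdIu (A B : PreFlow) : Prop :=
  ∃ v₁ v₂ v₃ e e₁ e₂ e₃ g₁ g₂,
    v₁ ∈ A.V ∧ v₂ ∈ A.V ∧ v₁ ≠ v₂ ∧ v₃ ∉ A.V ∧
    A.η v₁ = .acDown ∧ A.η v₂ = .aiUp ∧
    e ∈ A.E ∧ e₁ ∈ A.E ∧ e₂ ∈ A.E ∧ e₃ ∈ A.E ∧
    e ≠ e₁ ∧ e ≠ e₂ ∧ e ≠ e₃ ∧ e₁ ≠ e₂ ∧ e₁ ≠ e₃ ∧ e₂ ≠ e₃ ∧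
    g₁ ∉ A.E ∧ g₂ ∉ A.E ∧ g₁ ≠ g₂ ∧
    A.lo e₁ = some v₁ ∧ A.lo e₂ = some v₁ ∧
    A.up e = some v₁ ∧ A.lo e = some v₂ ∧ A.lo e₃ = some v₂ ∧
    B.V = insert v₃ A.V ∧
    B.E = insert g₁ (insert g₂ (A.E.erase e)) ∧
    B.η = Function.update (Function.update A.η v₁ .acUp) v₃ .aiUp ∧
    B.up = Function.update (Function.update A.up g₁ (some v₁)) g₂ (some v₁) ∧
    B.lo = Function.update (Function.update (Function.update
      (Function.update (Function.update A.lo e₁ (some v₂)) e₂ (some v₃))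
        e₃ (some v₁)) g₁ (some v₂)) g₂ (some v₃)

/-- Rule `i↓-c↑` (dual of `c↓-i↑`). -/
def RedIdCu (A B : PreFlow) : Prop :=
  ∃ v₁ v₂ v₃ e e₁ e₂ e₃ g₁ g₂,
    v₁ ∈ A.V ∧ v₂ ∈ A.V ∧ v₁ ≠ v₂ ∧ v₃ ∉ A.V ∧
    A.η v₁ = .acUp ∧ A.η v₂ = .aiDown ∧
    e ∈ A.E ∧ e₁ ∈ A.E ∧ e₂ ∈ A.E ∧ e₃ ∈ A.E ∧
    e ≠ e₁ ∧ e ≠ e₂ ∧ e ≠ e₃ ∧ e₁ ≠ e₂ ∧ e₁ ≠ e₃ ∧ e₂ ≠ e₃ ∧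
    g₁ ∉ A.E ∧ g₂ ∉ A.E ∧ g₁ ≠ g₂ ∧
    A.up e₁ = some v₁ ∧ A.up e₂ = some v₁ ∧
    A.lo e = some v₁ ∧ A.up e = some v₂ ∧ A.up e₃ = some v₂ ∧
    B.V = insert v₃ A.V ∧
    B.E = insert g₁ (insert g₂ (A.E.erase e)) ∧
    B.η = Function.update (Function.update A.η v₁ .acDown) v₃ .aiDown ∧
    B.lo = Function.update (Function.update A.lo g₁ (some v₁)) g₂ (some v₁) ∧
    B.up = Function.update (Function.update (Function.update
      (Function.update (Function.update A.up e₁ (some v₂)) e₂ (some v₃))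
        e₃ (some v₁)) g₁ (some v₂)) g₂ (some v₃)

/-- Rule `c↓-c↑`: a contraction whose output enters a cocontraction is
replaced by two cocontractions above two contractions, crosswise connected. -/
def RedCdCu (A B : PreFlow) : Prop :=
  ∃ v₁ v₂ v₃ v₄ e e₁ e₂ e₃ e₄ g₁₁ g₁₂ g₂₁ g₂₂,
    v₁ ∈ A.V ∧ v₂ ∈ A.V ∧ v₁ ≠ v₂ ∧
    v₃ ∉ A.V ∧ v₄ ∉ A.V ∧ v₃ ≠ v₄ ∧
    A.η v₁ = .acDown ∧ A.η v₂ = .acUp ∧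
    e ∈ A.E ∧ e₁ ∈ A.E ∧ e₂ ∈ A.E ∧ e₃ ∈ A.E ∧ e₄ ∈ A.E ∧
    e ≠ e₁ ∧ e ≠ e₂ ∧ e ≠ e₃ ∧ e ≠ e₄ ∧
    e₁ ≠ e₂ ∧ e₁ ≠ e₃ ∧ e₁ ≠ e₄ ∧ e₂ ≠ e₃ ∧ e₂ ≠ e₄ ∧ e₃ ≠ e₄ ∧
    g₁₁ ∉ A.E ∧ g₁₂ ∉ A.E ∧ g₂₁ ∉ A.E ∧ g₂₂ ∉ A.E ∧
    g₁₁ ≠ g₁₂ ∧ g₁₁ ≠ g₂₁ ∧ g₁₁ ≠ g₂₂ ∧ g₁₂ ≠ g₂₁ ∧ g₁₂ ≠ g₂₂ ∧ g₂₁ ≠ g₂₂ ∧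
    A.lo e₁ = some v₁ ∧ A.lo e₂ = some v₁ ∧ A.up e = some v₁ ∧
    A.lo e = some v₂ ∧ A.up e₃ = some v₂ ∧ A.up e₄ = some v₂ ∧
    B.V = insert v₃ (insert v₄ A.V) ∧
    B.E = insert g₁₁ (insert g₁₂ (insert g₂₁ (insert g₂₂ (A.E.erase e)))) ∧
    B.η = Function.update (Function.update (Function.update
      (Function.update A.η v₁ .acUp) v₂ .acUp) v₃ .acDown) v₄ .acDown ∧
    B.up = Function.update (Function.update (Function.update
      (Function.update (Function.update (Function.update A.up
        e₃ (some v₃)) e₄ (some v₄)) g₁₁ (some v₁)) g₁₂ (some v₁))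
          g₂₁ (some v₂)) g₂₂ (some v₂) ∧
    B.lo = Function.update (Function.update (Function.update
      (Function.update (Function.update A.lo e₂ (some v₂)) g₁₁ (some v₃))
        g₁₂ (some v₄)) g₂₁ (some v₃)) g₂₂ (some v₄)

/-- One step of the flow rewriting system `w`. -/
def StepW (A B : PreFlow) : Prop :=
  RedWdCd A B ∨ RedCuWu A B ∨ RedWdIu A B ∨ RedIdWu A B ∨
  RedWdWu A B ∨ RedWdCu A B ∨ RedCdWu A B

/-- One step of the flow rewriting system `c`. -/
def StepC (A B : PreFlow) : Prop :=
  RedCdIu A B ∨ RedIdCu A B ∨ RedCdCu A B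

/-- `A` is normal for the flow rewriting system `w`. -/
def NormalW (A : PreFlow) : Prop := ¬ ∃ B, StepW A B

/-- `A` is normal for the flow rewriting system `c`. -/
def NormalC (A : PreFlow) : Prop := ¬ ∃ B, StepC A B

/-! ### Flow isomorphisms. -/

structure FlowIso (A B : PreFlow) : Type where
  vmap : ℕ → ℕ
  emap : ℕ → ℕ
  vbij : Set.BijOn vmap (A.V : Set ℕ) (B.V : Set ℕ)
  ebij : Set.BijOn emap (A.E : Set ℕ) (B.E : Set ℕ)
  lab : ∀ v ∈ A.V, B.η (vmap v) = A.η v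
  upc : ∀ e ∈ A.E, B.up (emap e) = (A.up e).map vmap
  loc : ∀ e ∈ A.E, B.lo (emap e) = (A.lo e).map vmap

/-! ### The global reduction `→se` (elimination of a simple edge). -/

/-- The flow obtained from `B` by eliminating the simple edge `e0` between
the interaction `vi` and the cointeraction `vc` (with `e2` the other lower
edge of `vi` and `e3` the other upper edge of `vc`): two copies (tags `0`,
hat, the lower one, and `1`, tilde, the upper one) of the remaining flow are
glued by identifying the hat copy of `e2` with the tilde copy of `e3`; a
weakening (vertex `(2,0)`) is placed above the tilde copy of `e2`, a
coweakening (vertex `(2,1)`) below the hat copy of `e3`; each upper edge `ε`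
of `B` gives a cocontraction (vertex `(3,ε)`, with a new upper edge `(3,ε)`)
joining the two copies of `ε`, and dually each lower edge `ε'` of `B` gives
a contraction (vertex `(4,ε')`, with a new lower edge `(4,ε')`). -/
def seFlow (B : PreFlow) (vi vc e0 e2 e3 : ℕ) : PreFlow :=
  { V := ((B.V.erase vi).erase vc).image (Nat.pair 0) ∪
         ((B.V.erase vi).erase vc).image (Nat.pair 1) ∪
         {Nat.pair 2 0, Nat.pair 2 1} ∪
         (B.E.filter (fun e => B.up e = none)).image (Nat.pair 3) ∪
         (B.E.filter (fun e => B.lo e = none)).image (Nat.pair 4),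
    E := (B.E.erase e0).image (Nat.pair 0) ∪
         (B.E.erase e0).image (fun e => if e = e3 then Nat.pair 0 e2 else Nat.pair 1 e) ∪
         (B.E.filter (fun e => B.up e = none)).image (Nat.pair 3) ∪
         (B.E.filter (fun e => B.lo e = none)).image (Nat.pair 4),
    η := fun x =>
      if (Nat.unpair x).1 = 2 then
        (if (Nat.unpair x).2 = 0 then FlowLabel.awDown else FlowLabel.awUp)
      else if (Nat.unpair x).1 = 3 then FlowLabel.acUp
      else if (Nat.unpair x).1 = 4 then FlowLabel.acDown
      else B.η (Nat.unpair x).2,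
    up := fun x =>
      let t := (Nat.unpair x).1
      let y := (Nat.unpair x).2
      if t = 0 then
        (if y = e2 then
          (match B.up e3 with
           | some v => some (Nat.pair 1 v)
           | none => some (Nat.pair 3 e3))
        else
          (match B.up y with
           | some v => some (Nat.pair 0 v)
           | none => some (Nat.pair 3 y)))
      else if t = 1 then
        (if y = e2 then some (Nat.pair 2 0)
        else
          (match B.up y with
           | some v => some (Nat.pair 1 v)
           | none => some (Nat.pair 3 y)))
      else if t = 3 then none
      else some (Nat.pair 4 y),
    lo := fun x =>
      let t := (Nat.unpair x).1
      let y := (Nat.unpair x).2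
      if t = 0 then
        (if y = e2 then
          (match B.lo e2 with
           | some v => some (Nat.pair 0 v)
           | none => some (Nat.pair 4 e2))
        else if y = e3 then some (Nat.pair 2 1)
        else
          (match B.lo y with
           | some v => some (Nat.pair 0 v)
           | none => some (Nat.pair 4 y)))
      else if t = 1 then
        (match B.lo y with
         | some v => some (Nat.pair 1 v)
         | none => some (Nat.pair 4 y))
      else if t = 3 then some (Nat.pair 3 y)
      else none }

/-- The reduction `→se`: elimination of a simple edge (up to flow
isomorphism). -/
def RedSE (B C : PreFlow) : Prop :=
  ∃ vi vc e0 e2 e3,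
    vi ∈ B.V ∧ vc ∈ B.V ∧ vi ≠ vc ∧
    B.η vi = .aiDown ∧ B.η vc = .aiUp ∧
    e0 ∈ B.E ∧ e2 ∈ B.E ∧ e3 ∈ B.E ∧
    e0 ≠ e2 ∧ e0 ≠ e3 ∧ e2 ≠ e3 ∧
    B.up e0 = some vi ∧ B.lo e0 = some vc ∧
    B.up e2 = some vi ∧ B.lo e3 = some vc ∧
    Nonempty (FlowIso C (seFlow B vi vc e0 e2 e3))

/-! ### The atomic flow associated with a derivation. -/

/-- Correspondence conditions for a linear rule applied at position `q`:
for each pair `(c₁, c₂)` in `cs`, occurrences at `q ++ c₁ ++ p` in the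
conclusion (formula `i+1`) are traced to occurrences at `q ++ c₂ ++ p` in
the premiss (formula `i`). -/
def corrCond (f : ℕ → List Bool → ℕ) (i : ℕ) (q : List Bool) (ψ : Formula)
    (cs : List (List Bool × List Bool)) : Prop :=
  ∀ c ∈ cs, ∀ p : List Bool, ψ.IsOcc (q ++ c.1 ++ p) →
    f (i + 1) (q ++ c.1 ++ p) = f i (q ++ c.2 ++ p)

/-- The tracing conditions for one inference step: occurrences in the
context are traced to the same edge, and the active occurrences of a
structural rule are related to the edges of the vertex `v` as prescribed by
its label, while the active occurrences of logical and `=` steps are traced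
to the same edges under the canonical correspondence. -/
def stepCond (A : PreFlow) (f : ℕ → List Bool → ℕ) (v : ℕ) (i : ℕ)
    (r : RuleName) (q : List Bool) (φ ψ : Formula) : Prop :=
  (∀ p, ¬ (q <+: p) → φ.IsOcc p → f (i + 1) p = f i p) ∧
  match r with
  | .aiDown =>
      A.η v = .aiDown ∧
      A.up (f (i + 1) (q ++ [false])) = some v ∧
      A.up (f (i + 1) (q ++ [true])) = some v ∧
      f (i + 1) (q ++ [false]) ≠ f (i + 1) (q ++ [true])
  | .aiUp =>
      A.η v = .aiUp ∧
      A.lo (f i (q ++ [false])) = some v ∧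
      A.lo (f i (q ++ [true])) = some v ∧
      f i (q ++ [false]) ≠ f i (q ++ [true])
  | .awDown => A.η v = .awDown ∧ A.up (f (i + 1) q) = some v
  | .awUp => A.η v = .awUp ∧ A.lo (f i q) = some v
  | .acDown =>
      A.η v = .acDown ∧
      A.lo (f i (q ++ [false])) = some v ∧
      A.lo (f i (q ++ [true])) = some v ∧
      A.up (f (i + 1) q) = some v ∧
      f i (q ++ [false]) ≠ f i (q ++ [true])
  | .acUp =>
      A.η v = .acUp ∧
      A.lo (f i q) = some v ∧
      A.up (f (i + 1) (q ++ [false])) = some v ∧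
      A.up (f (i + 1) (q ++ [true])) = some v ∧
      f (i + 1) (q ++ [false]) ≠ f (i + 1) (q ++ [true])
  | .s => corrCond f i q ψ
      [([false, false], [false]), ([false, true], [true, false]),
       ([true], [true, true])]
  | .m => corrCond f i q ψ
      [([false, false], [false, false]), ([true, false], [false, true]),
       ([false, true], [true, false]), ([true, true], [true, true])]
  | .eqOrComm => corrCond f i q ψ [([false], [true]), ([true], [false])]
  | .eqAndComm => corrCond f i q ψ [([false], [true]), ([true], [false])]
  | .eqOrAssocL => corrCond f i q ψ
      [([false], [false, false]), ([true, false], [false, true]),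
       ([true, true], [true])]
  | .eqOrAssocR => corrCond f i q ψ
      [([false, false], [false]), ([false, true], [true, false]),
       ([true], [true, true])]
  | .eqAndAssocL => corrCond f i q ψ
      [([false], [false, false]), ([true, false], [false, true]),
       ([true, true], [true])]
  | .eqAndAssocR => corrCond f i q ψ
      [([false, false], [false]), ([false, true], [true, false]),
       ([true], [true, true])]
  | .eqOrUnitDel => corrCond f i q ψ [([], [false])]
  | .eqOrUnitAdd => corrCond f i q ψ [([false], [])]
  | .eqAndUnitDel => corrCond f i q ψ [([], [false])]
  | .eqAndUnitAdd => corrCond f i q ψ [([false], [])]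
  | .eqTTDel => True
  | .eqTTAdd => True
  | .eqFFDel => True
  | .eqFFAdd => True

/-- `A` is the atomic flow associated with the derivation `Φ`, where `f`
maps each atom occurrence (formula index, position) of `Φ` to an edge of
`A`, and `g` assigns to each structural inference step its vertex. -/
def IsAssocFlow (Φ : Deriv) (A : PreFlow) (f : ℕ → List Bool → ℕ)
    (g : ℕ → ℕ) : Prop :=
  Φ.WF ∧ A.IsFlow ∧
  (∀ i p, i < Φ.nf → (Φ.fml i).IsOcc p → f i p ∈ A.E) ∧
  (∀ e ∈ A.E, ∃ i p, i < Φ.nf ∧ (Φ.fml i).IsOcc p ∧ f i p = e) ∧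
  (∀ i p p', i < Φ.nf → (Φ.fml i).IsOcc p → (Φ.fml i).IsOcc p' →
    f i p = f i p' → p = p') ∧
  (∀ p, (Φ.fml 0).IsOcc p → A.up (f 0 p) = none) ∧
  (∀ p, (Φ.fml Φ.steps.length).IsOcc p → A.lo (f Φ.steps.length p) = none) ∧
  (∀ i, i < Φ.steps.length → (Φ.stepAt i).1.isStructural = true → g i ∈ A.V) ∧
  (∀ v ∈ A.V, ∃ i, i < Φ.steps.length ∧
    (Φ.stepAt i).1.isStructural = true ∧ g i = v) ∧
  (∀ i j, i < Φ.steps.length → j < Φ.steps.length →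
    (Φ.stepAt i).1.isStructural = true → (Φ.stepAt j).1.isStructural = true →
    g i = g j → i = j) ∧
  (∀ i, i < Φ.steps.length →
    stepCond A f (g i) i (Φ.stepAt i).1 (Φ.stepAt i).2.1
      (Φ.fml i) (Φ.fml (i + 1)))

/-! ### Streamlining. -/

/-- No path from an interaction or weakening vertex to a cointeraction or
coweakening vertex. -/
def NoIWPath (A : PreFlow) : Prop :=
  ¬ ∃ v v' l, v ∈ A.V ∧ v' ∈ A.V ∧
      (A.η v = .aiDown ∨ A.η v = .awDown) ∧
      (A.η v' = .aiUp ∨ A.η v' = .awUp) ∧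
      IsPath A (.ver v) (.ver v') l

/-- `Φ` is a streamlined derivation. -/
def Streamlined (Φ : Deriv) : Prop :=
  ∃ A f g, IsAssocFlow Φ A f g ∧ NoIWPath A

/-- `Φ` is a super-streamlined derivation. -/
def SuperStreamlined (Φ : Deriv) : Prop :=
  ∃ A f g, IsAssocFlow Φ A f g ∧ NoIWPath A ∧ NormalW A

/-- `Φ` is a hyper-streamlined derivation. -/
def HyperStreamlined (Φ : Deriv) : Prop :=
  ∃ A f g, IsAssocFlow Φ A f g ∧ NoIWPath A ∧ NormalW A ∧ NormalC A

end AF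

namespace AF

/-! ### Auxiliary development for cut elimination. -/

namespace CutElim

open Formula

/-- Cut-free derivability. -/
abbrev CF : Formula → Formula → Prop :=
  Derives {r : RuleName | r ≠ RuleName.aiUp}

@[simp] lemma sub_nil (φ : Formula) : φ.sub [] = some φ := by
  cases φ <;> rfl

@[simp] lemma repl_nil (φ ψ : Formula) : φ.repl [] ψ = ψ := by
  cases φ <;> rfl

lemma cf_single {r : RuleName} {γ δ : Formula} (hr : r ≠ RuleName.aiUp)
    (h : RuleInstance r γ δ) : CF γ δ :=
  Relation.ReflTransGen.single ⟨r, hr, [], γ, δ, sub_nil γ, h, (repl_nil γ δ).symm⟩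

lemma step_or_left {S : Set RuleName} {α α' β : Formula}
    (h : Step S α α') : Step S (.or α β) (.or α' β) := by
  obtain ⟨r, hr, q, γ, δ, h1, h2, h3⟩ := h
  exact ⟨r, hr, false :: q, γ, δ, h1, h2, by simp [Formula.repl, h3]⟩

lemma step_or_right {S : Set RuleName} {α β β' : Formula}
    (h : Step S β β') : Step S (.or α β) (.or α β') := by
  obtain ⟨r, hr, q, γ, δ, h1, h2, h3⟩ := h
  exact ⟨r, hr, true :: q, γ, δ, h1, h2, by simp [Formula.repl, h3]⟩

lemma step_and_left {S : Set RuleName} {α α' β : Formula}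
    (h : Step S α α') : Step S (.and α β) (.and α' β) := by
  obtain ⟨r, hr, q, γ, δ, h1, h2, h3⟩ := h
  exact ⟨r, hr, false :: q, γ, δ, h1, h2, by simp [Formula.repl, h3]⟩

lemma step_and_right {S : Set RuleName} {α β β' : Formula}
    (h : Step S β β') : Step S (.and α β) (.and α β') := by
  obtain ⟨r, hr, q, γ, δ, h1, h2, h3⟩ := h
  exact ⟨r, hr, true :: q, γ, δ, h1, h2, by simp [Formula.repl, h3]⟩

lemma cf_or {α α' β β' : Formula} (h1 : CF α α') (h2 : CF β β') :
    CF (.or α β) (.or α' β') :=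
  (Relation.ReflTransGen.lift (fun x => Formula.or x β)
      (fun a b h => step_or_left h) _ _ h1).trans
    (Relation.ReflTransGen.lift (fun x => Formula.or α' x)
      (fun a b h => step_or_right h) _ _ h2)

lemma cf_and {α α' β β' : Formula} (h1 : CF α α') (h2 : CF β β') :
    CF (.and α β) (.and α' β') :=
  (Relation.ReflTransGen.lift (fun x => Formula.and x β)
      (fun a b h => step_and_left h) _ _ h1).trans
    (Relation.ReflTransGen.lift (fun x => Formula.and α' x)
      (fun a b h => step_and_right h) _ _ h2)

/-! #### Semantics. -/

/-- Boolean evaluation of a formula. -/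
def eval (v : ℕ → Bool) : Formula → Bool
  | .tt => true
  | .ff => false
  | .atom n b => if b then v n else !(v n)
  | .or α β => eval v α || eval v β
  | .and α β => eval v α && eval v β

lemma inst_sound {r : RuleName} {γ δ : Formula} (h : RuleInstance r γ δ)
    (v : ℕ → Bool) (hv : eval v γ = true) : eval v δ = true := by
  cases h <;> simp_all [eval] <;> first
    | tauto
    | (rename_i n b; cases b <;> simp_all)

lemma repl_mono (v : ℕ → Bool) :
    ∀ (q : List Bool) (φ γ δ : Formula), φ.sub q = some γ →
      (eval v γ = true → eval v δ = true) →
      eval v φ = true → eval v (φ.repl q δ) = true := by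
  intro q
  induction q with
  | nil =>
    intro φ γ δ hs himp hφ
    rw [sub_nil, Option.some_inj] at hs
    subst hs
    rw [repl_nil]
    exact himp hφ
  | cons b q ih =>
    intro φ γ δ hs himp hφ
    cases φ with
    | tt => simp [Formula.sub] at hs
    | ff => simp [Formula.sub] at hs
    | atom n c => simp [Formula.sub] at hs
    | or α β =>
      cases b with
      | false =>
        simp only [Formula.sub] at hs
        simp only [Formula.repl, eval, Bool.or_eq_true] at hφ ⊢
        rcases hφ with hφ | hφ
        · exact Or.inl (ih α γ δ hs himp hφ)
        · exact Or.inr hφ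
      | true =>
        simp only [Formula.sub] at hs
        simp only [Formula.repl, eval, Bool.or_eq_true] at hφ ⊢
        rcases hφ with hφ | hφ
        · exact Or.inl hφ
        · exact Or.inr (ih β γ δ hs himp hφ)
    | and α β =>
      cases b with
      | false =>
        simp only [Formula.sub] at hs
        simp only [Formula.repl, eval, Bool.and_eq_true] at hφ ⊢
        exact ⟨ih α γ δ hs himp hφ.1, hφ.2⟩
      | true =>
        simp only [Formula.sub] at hs
        simp only [Formula.repl, eval, Bool.and_eq_true] at hφ ⊢
        exact ⟨hφ.1, ih β γ δ hs himp hφ.2⟩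

lemma derives_sound {φ ψ : Formula} (h : Derives Set.univ φ ψ)
    (v : ℕ → Bool) (hφ : eval v φ = true) : eval v ψ = true := by
  induction h with
  | refl => exact hφ
  | tail _ hstep ih =>
    obtain ⟨r, -, q, γ, δ, h1, h2, rfl⟩ := hstep
    exact repl_mono v q _ γ δ h1 (inst_sound h2 v) ih

/-! #### Basic cut-free derivations. -/

lemma ffToTt : CF Formula.ff Formula.tt := by
  refine (cf_single (by decide) RuleInstance.eqFFAdd).trans ?_
  refine (cf_and
    ((cf_single (by decide) (RuleInstance.awDown 0 true)).trans
      (cf_single (by decide) (RuleInstance.awUp 0 true)))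
    ((cf_single (by decide) (RuleInstance.awDown 0 true)).trans
      (cf_single (by decide) (RuleInstance.awUp 0 true)))).trans ?_
  exact cf_single (by decide) (RuleInstance.eqAndUnitDel .tt)

/-- Generic weakening. -/
lemma weak : ∀ α : Formula, CF Formula.ff α
  | .tt => ffToTt
  | .ff => Relation.ReflTransGen.refl
  | .atom n b => cf_single (by decide) (RuleInstance.awDown n b)
  | .or α β => (cf_single (by decide) (RuleInstance.eqOrUnitAdd .ff)).trans
      (cf_or (weak α) (weak β))
  | .and α β => (cf_single (by decide) RuleInstance.eqFFAdd).trans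
      (cf_and (weak α) (weak β))

/-- Generic coweakening. -/
lemma coweak : ∀ α : Formula, CF α Formula.tt
  | .tt => Relation.ReflTransGen.refl
  | .ff => ffToTt
  | .atom n b => cf_single (by decide) (RuleInstance.awUp n b)
  | .or α β => (cf_or (coweak α) (coweak β)).trans
      (cf_single (by decide) RuleInstance.eqTTDel)
  | .and α β => (cf_and (coweak α) (coweak β)).trans
      (cf_single (by decide) (RuleInstance.eqAndUnitDel .tt))

/-- Generic contraction. -/
lemma contr : ∀ α : Formula, CF (.or α α) α
  | .tt => cf_single (by decide) RuleInstance.eqTTDel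
  | .ff => cf_single (by decide) (RuleInstance.eqOrUnitDel .ff)
  | .atom n b => cf_single (by decide) (RuleInstance.acDown n b)
  | .or α β =>
      (cf_single (by decide) (RuleInstance.eqOrAssocL α β (.or α β))).trans <|
      (cf_or Relation.ReflTransGen.refl
        (cf_or Relation.ReflTransGen.refl
          (cf_single (by decide) (RuleInstance.eqOrComm α β)))).trans <|
      (cf_or Relation.ReflTransGen.refl
        (cf_single (by decide) (RuleInstance.eqOrAssocR β β α))).trans <|
      (cf_or Relation.ReflTransGen.refl
        (cf_or (contr β) Relation.ReflTransGen.refl)).trans <|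
      (cf_or Relation.ReflTransGen.refl
        (cf_single (by decide) (RuleInstance.eqOrComm β α))).trans <|
      (cf_single (by decide) (RuleInstance.eqOrAssocR α α β)).trans <|
      cf_or (contr α) Relation.ReflTransGen.refl
  | .and α β =>
      (cf_single (by decide) (RuleInstance.m α β α β)).trans
        (cf_and (contr α) (contr β))

/-! #### Substitution of an atom by a truth value. -/

/-- Replace the atom `(n, b)` by `t` and its dual `(n, !b)` by `f`. -/
def psub (n : ℕ) (b : Bool) : Formula → Formula
  | .tt => .tt
  | .ff => .ff
  | .atom m c => if m = n then (if c = b then .tt else .ff) else .atom m c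
  | .or α β => .or (psub n b α) (psub n b β)
  | .and α β => .and (psub n b α) (psub n b β)

/-- The atom names occurring in a formula. -/
def names : Formula → Finset ℕ
  | .tt => ∅
  | .ff => ∅
  | .atom m _ => {m}
  | .or α β => names α ∪ names β
  | .and α β => names α ∪ names β

lemma names_psub (n : ℕ) (b : Bool) :
    ∀ α : Formula, names (psub n b α) ⊆ (names α).erase n := by
  intro α
  induction α with
  | tt => simp [psub, names]
  | ff => simp [psub, names]
  | atom m c =>
    by_cases h : m = n
    · subst h
      by_cases hc : c = b <;> simp [psub, names, hc]
    · simp [psub, names, h]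
  | or α β ihα ihβ =>
    simp only [psub, names, Finset.erase_union_distrib]
    exact Finset.union_subset_union ihα ihβ
  | and α β ihα ihβ =>
    simp only [psub, names, Finset.erase_union_distrib]
    exact Finset.union_subset_union ihα ihβ

lemma eval_psub (v : ℕ → Bool) (n : ℕ) (b : Bool) :
    ∀ α : Formula, eval v (psub n b α) = eval (Function.update v n b) α := by
  intro α
  induction α with
  | tt => rfl
  | ff => rfl
  | atom m c =>
    by_cases h : m = n
    · subst h
      by_cases hc : c = b
      · subst hc
        cases c <;> simp [psub, eval, Function.update]
      · have hcb : c = !b := by cases c <;> cases b <;> simp_all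
        subst hcb
        cases b <;> simp [psub, eval, Function.update]
    · simp [psub, eval, Function.update, h]
  | or α β ihα ihβ => simp [psub, eval, ihα, ihβ]
  | and α β ihα ihβ => simp [psub, eval, ihα, ihβ]

/-- Absorb an atom into a formula where it was substituted away. -/
lemma dropAtom (n : ℕ) (b : Bool) (β : Formula) :
    CF (.and (.atom n b) β) β :=
  (cf_and (cf_single (by decide) (RuleInstance.awUp n b))
      Relation.ReflTransGen.refl).trans <|
  (cf_single (by decide) (RuleInstance.eqAndComm .tt β)).trans <|
  cf_single (by decide) (RuleInstance.eqAndUnitDel β)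

lemma absorb (n : ℕ) (b : Bool) :
    ∀ α : Formula, CF (.and (.atom n b) (psub n b α)) α
  | .tt => dropAtom n b .tt
  | .ff => dropAtom n b .ff
  | .atom m c => by
    by_cases h : m = n
    · subst h
      by_cases hc : c = b
      · subst hc
        simpa [psub] using
          cf_single (r := RuleName.eqAndUnitDel) (by decide)
            (RuleInstance.eqAndUnitDel (.atom m c))
      · simp only [psub, if_pos rfl, if_neg hc]
        exact (dropAtom m b .ff).trans
          (cf_single (by decide) (RuleInstance.awDown m c))
    · simp only [psub, if_neg h]
      exact dropAtom n b (.atom m c)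
  | .or β₁ β₂ =>
      let a := Formula.atom n b
      let s₁ := psub n b β₁
      let s₂ := psub n b β₂
      (cf_and (cf_single (by decide) (RuleInstance.acUp n b))
          Relation.ReflTransGen.refl).trans <|
      (cf_single (by decide)
        (RuleInstance.eqAndAssocL a a (.or s₁ s₂))).trans <|
      (cf_and Relation.ReflTransGen.refl
        (cf_single (by decide) (RuleInstance.s a s₁ s₂))).trans <|
      (cf_and Relation.ReflTransGen.refl
        (cf_or (absorb n b β₁) Relation.ReflTransGen.refl)).trans <|
      (cf_and Relation.ReflTransGen.refl
        (cf_single (by decide) (RuleInstance.eqOrComm β₁ s₂))).trans <|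
      (cf_single (by decide) (RuleInstance.s a s₂ β₁)).trans <|
      (cf_or (absorb n b β₂) Relation.ReflTransGen.refl).trans <|
      cf_single (by decide) (RuleInstance.eqOrComm β₂ β₁)
  | .and β₁ β₂ =>
      let a := Formula.atom n b
      let s₁ := psub n b β₁
      let s₂ := psub n b β₂
      (cf_and (cf_single (by decide) (RuleInstance.acUp n b))
          Relation.ReflTransGen.refl).trans <|
      (cf_single (by decide)
        (RuleInstance.eqAndAssocL a a (.and s₁ s₂))).trans <|
      (cf_and Relation.ReflTransGen.refl
        (cf_single (by decide) (RuleInstance.eqAndAssocR a s₁ s₂))).trans <|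
      (cf_and Relation.ReflTransGen.refl
        (cf_and (absorb n b β₁) Relation.ReflTransGen.refl)).trans <|
      (cf_and Relation.ReflTransGen.refl
        (cf_single (by decide) (RuleInstance.eqAndComm β₁ s₂))).trans <|
      (cf_single (by decide) (RuleInstance.eqAndAssocR a s₂ β₁)).trans <|
      (cf_and (absorb n b β₂) Relation.ReflTransGen.refl).trans <|
      cf_single (by decide) (RuleInstance.eqAndComm β₂ β₁)

/-! #### Completeness of the cut-free system. -/

lemma closedProof : ∀ α : Formula, names α = ∅ →
    eval (fun _ => false) α = true → CF Formula.tt α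
  | .tt, _, _ => Relation.ReflTransGen.refl
  | .ff, _, h => by simp [eval] at h
  | .atom n b, h, _ => by simp [names] at h
  | .or α β, h, he => by
    rw [names, Finset.union_eq_empty] at h
    rw [eval, Bool.or_eq_true] at he
    rcases he with he | he
    · exact (cf_single (by decide) (RuleInstance.eqOrUnitAdd .tt)).trans
        (cf_or (closedProof α h.1 he) (weak β))
    · exact (cf_single (by decide) (RuleInstance.eqOrUnitAdd .tt)).trans
        ((cf_single (by decide) (RuleInstance.eqOrComm .tt .ff)).trans
          (cf_or (weak α) (closedProof β h.2 he)))
  | .and α β, h, he => by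
    rw [names, Finset.union_eq_empty] at h
    rw [eval, Bool.and_eq_true] at he
    exact (cf_single (by decide) (RuleInstance.eqAndUnitAdd .tt)).trans
      (cf_and (closedProof α h.1 he.1) (closedProof β h.2 he.2))

lemma completeness : ∀ (k : ℕ) (α : Formula), (names α).card ≤ k →
    (∀ v, eval v α = true) → CF Formula.tt α := by
  intro k
  induction k with
  | zero =>
    intro α h hv
    exact closedProof α (Finset.card_eq_zero.mp (Nat.le_zero.mp h)) (hv _)
  | succ k ih =>
    intro α h hv
    by_cases hne : names α = ∅
    · exact closedProof α hne (hv _)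
    · obtain ⟨n, hn⟩ := Finset.nonempty_iff_ne_empty.mpr hne
      have hcard : ∀ b : Bool, (names (psub n b α)).card ≤ k := by
        intro b
        have h1 := Finset.card_le_card (names_psub n b α)
        have h2 : ((names α).erase n).card = (names α).card - 1 :=
          Finset.card_erase_of_mem hn
        have h3 : 1 ≤ (names α).card := Finset.card_pos.mpr ⟨n, hn⟩
        omega
      have hval : ∀ b : Bool, ∀ v, eval v (psub n b α) = true := by
        intro b v
        rw [eval_psub]
        exact hv _
      have hp : CF Formula.tt (psub n true α) := ih _ (hcard true) (hval true)
      have hm : CF Formula.tt (psub n false α) := ih _ (hcard false) (hval false)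
      have step0 : CF Formula.tt (.or (.atom n true) (.atom n false)) :=
        cf_single (by decide) (RuleInstance.aiDown n true)
      have stepL : CF (Formula.atom n true) α :=
        (cf_single (by decide) (RuleInstance.eqAndUnitAdd (.atom n true))).trans <|
        (cf_and Relation.ReflTransGen.refl hp).trans (absorb n true α)
      have stepR : CF (Formula.atom n false) α :=
        (cf_single (by decide) (RuleInstance.eqAndUnitAdd (.atom n false))).trans <|
        (cf_and Relation.ReflTransGen.refl hm).trans (absorb n false α)
      exact step0.trans ((cf_or stepL stepR).trans (contr α))

end CutElim

/-- Cut elimination: every SKS proof of `α` (a derivation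
from `t` to `α` using all SKS rules) can be replaced by a cut-free SKS
proof of `α`, i.e. one using no instance of `ai↑`. -/
theorem statement_1 (α : Formula) (h : Derives Set.univ Formula.tt α) :
    Derives {r : RuleName | r ≠ RuleName.aiUp} Formula.tt α := by
  exact CutElim.completeness (CutElim.names α).card α le_rfl
    (fun v => CutElim.derives_sound h v rfl)

end AF
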